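/- If L is an h-sorted lattice of height h, then J(K) ≤ 2 for every present key K and J(K) ≤ 4 for every absent key K; consequently J(L) ≤ 4. -/

import Mathlib

open scoped Classical

/-- The number of maximal runs (blocks of consecutive equal letters) of a word. -/
def numRuns (w : List Bool) : ℕ := (w.destutter (· ≠ ·)).length

/-- A lattice data structure of height `h`.  The cell on row `r` and column `c`
(with `1 ≤ r`, `1 ≤ c`, `r + c ≤ h + 4`) holds the value `val r c : ℕ∞`, where
`0` and `⊤` are the improper keys and all other values are proper keys.  The
cell on diagonal `s` and (diagonal-)position `j` is the cell `(s + 1 - j, j)`. -/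
structure LDS (h : ℕ) where
  val : ℕ → ℕ → ℕ∞
  /-- every cell of row one contains `0` -/
  row_one : ∀ c, val 1 c = 0
  /-- every cell of column one contains `0` -/
  col_one : ∀ r, val r 1 = 0
  /-- every cell of diagonal `h + 3` except its head and tail contains `∞` -/
  top_diag : ∀ r c, 2 ≤ r → 2 ≤ c → r + c = h + 4 → val r c = ⊤
  /-- non-boundary cells contain positive keys (proper keys or `∞`) -/
  pos : ∀ r c, 2 ≤ r → 2 ≤ c → r + c ≤ h + 3 → 0 < val r c
  /-- cells on diagonals up to `h + 1` contain proper keys (not `∞`) -/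
  proper_inner : ∀ r c, 2 ≤ r → 2 ≤ c → r + c ≤ h + 2 → val r c ≠ ⊤
  /-- keys increase from left to right along rows -/
  row_mono : ∀ r c, 2 ≤ r → 2 ≤ c → r + (c + 1) ≤ h + 3 → val r c < val r (c + 1)
  /-- keys increase from bottom to top along columns -/
  col_mono : ∀ r c, 2 ≤ r → 2 ≤ c → (r + 1) + c ≤ h + 3 → val r c < val (r + 1) c
  /-- proper keys increase from head to tail along diagonals -/
  diag_mono : ∀ r c, 3 ≤ r → 2 ≤ c → r + c ≤ h + 3 → val (r - 1) (c + 1) ≠ ⊤ →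
      val r c < val (r - 1) (c + 1)

/-- A lattice of height `h` is sorted of degree `α` (`α`-sorted) if for each
`4 ≤ s ≤ α + 2` the first proper key of diagonal `s` (the cell `(s - 1, 2)`)
is greater than the last proper key of diagonal `s - 1` (the cell `(2, s - 2)`). -/
def AlphaSorted (h α : ℕ) (L : LDS h) : Prop :=
  ∀ s, 4 ≤ s → s ≤ α + 2 → L.val 2 (s - 2) < L.val (s - 1) 2

/-- The search path of `SearchLDS` starting at row `r`, column `c`:  the current
cell `C = val r c` is compared with the key `K`; the search stops if `C = K`
or `C = 0`, moves down-right (`d`, recorded as `true`) if `K > C`, and moves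
down (`D`, recorded as `false`) if `K < C`. -/
def searchPath (val : ℕ → ℕ → ℕ∞) (K : ℕ∞) : ℕ → ℕ → List Bool
  | 0, _ => []
  | r + 1, c =>
    if val (r + 1) c = K ∨ val (r + 1) c = 0 then []
    else if val (r + 1) c < K then true :: searchPath val K r (c + 1)
    else false :: searchPath val K r c

/-- The search path of a key `K` with respect to a lattice of height `h`:
`SearchLDS` starts at the second cell of diagonal `h + 2`, i.e. row `h + 1`,
column `2`. -/
def path (h : ℕ) (L : LDS h) (K : ℕ∞) : List Bool :=
  searchPath L.val K (h + 1) 2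

/-- `K` is a present key of `L`: it occupies some non-boundary cell. -/
def Present (h : ℕ) (L : LDS h) (K : ℕ∞) : Prop :=
  ∃ r c, 2 ≤ r ∧ 2 ≤ c ∧ r + c ≤ h + 3 ∧ L.val r c = K

/-- `K` is in the search space of `L`: a positive finite value. -/
def InSearchSpace (K : ℕ∞) : Prop := 0 < K ∧ K ≠ ⊤

/- ### numRuns lemmas -/

lemma destutter'_length_le (w : List Bool) : ∀ a : Bool,
    (List.destutter' (· ≠ ·) a w).length ≤ (w.destutter (· ≠ ·)).length + 1 := by
  induction w with
  | nil => intro a; simp [List.destutter'_nil]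
  | cons b l ih =>
    intro a
    by_cases hab : a = b
    · subst hab
      rw [List.destutter'_cons, if_neg (by simp), List.destutter_cons']
      exact Nat.le_succ _
    · rw [List.destutter'_cons, if_pos (by simpa using hab), List.destutter_cons']
      simp

lemma numRuns_cons_le (a : Bool) (w : List Bool) : numRuns (a :: w) ≤ numRuns w + 1 := by
  rw [numRuns, List.destutter_cons']
  exact destutter'_length_le w a

lemma numRuns_cons_cons (x : Bool) (w : List Bool) :
    numRuns (x :: x :: w) = numRuns (x :: w) := by
  rw [numRuns, numRuns, List.destutter_cons', List.destutter_cons',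
    List.destutter'_cons, if_neg (by simp)]

lemma numRuns_replicate_append : ∀ (n : ℕ) (x : Bool) (w : List Bool),
    numRuns (List.replicate n x ++ w) ≤ numRuns w + 1
  | 0, x, w => by simpa using Nat.le_succ (numRuns w)
  | 1, x, w => by simpa using numRuns_cons_le x w
  | (n+2), x, w => by
      have h2 : List.replicate (n+2) x ++ w = x :: x :: (List.replicate n x ++ w) := by
        simp [List.replicate_succ]
      have h3 : (x :: (List.replicate n x ++ w)) = List.replicate (n+1) x ++ w := by
        simp [List.replicate_succ]
      rw [h2, numRuns_cons_cons, h3]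
      exact numRuns_replicate_append (n+1) x w

lemma numRuns_replicate (n : ℕ) (x : Bool) : numRuns (List.replicate n x) ≤ 1 := by
  simpa [numRuns, List.destutter] using numRuns_replicate_append n x []

/- ### search path hypotheses -/

def ATh (val : ℕ → ℕ → ℕ∞) (K : ℕ∞) (r c : ℕ) : Prop :=
  ∀ i, (∀ j < i, 0 < val (r - j) (c + j) ∧ val (r - j) (c + j) < K) →
    val (r - i) (c + i) ≤ K ∨ val (r - i) (c + i) = 0

def P2h (val : ℕ → ℕ → ℕ∞) (K : ℕ∞) (r c : ℕ) : Prop :=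
  ∀ i, (∀ j < i, 0 < val (r - j) (c + j) ∧ val (r - j) (c + j) < K) →
    val (r - i) (c + i) ≤ K ∨ val (r - i) (c + i) = 0 ∨
      (K < val (r - i) (c + i) ∧ ATh val K (r - i - 1) (c + i))

def Dsc (val : ℕ → ℕ → ℕ∞) (K : ℕ∞) (P : ℕ → ℕ → Prop) (r : ℕ) : Prop :=
  ∀ i, (∀ j < i, K < val (r - j) 2) →
    val (r - i) 2 = K ∨ val (r - i) 2 = 0 ∨ K < val (r - i) 2 ∨
      (val (r - i) 2 < K ∧ P (r - i) 2)

lemma guard_shift {val : ℕ → ℕ → ℕ∞} {K : ℕ∞} {r c i : ℕ}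
    (h0 : 0 < val (r + 1) c ∧ val (r + 1) c < K)
    (hg : ∀ j < i, 0 < val (r - j) (c + 1 + j) ∧ val (r - j) (c + 1 + j) < K) :
    ∀ j < i + 1, 0 < val (r + 1 - j) (c + j) ∧ val (r + 1 - j) (c + j) < K := by
  intro j hj
  cases j with
  | zero => simpa using h0
  | succ k =>
    have e1 : r + 1 - (k+1) = r - k := by omega
    have e2 : c + (k+1) = c + 1 + k := by omega
    rw [e1, e2]
    exact hg k (by omega)

lemma ATh_shift {val : ℕ → ℕ → ℕ∞} {K : ℕ∞} {r c : ℕ}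
    (h1 : ATh val K (r + 1) c) (h0 : 0 < val (r + 1) c ∧ val (r + 1) c < K) :
    ATh val K r (c + 1) := by
  intro i hg
  have := h1 (i + 1) (guard_shift h0 hg)
  have e1 : r + 1 - (i+1) = r - i := by omega
  have e2 : c + (i+1) = c + 1 + i := by omega
  rwa [e1, e2] at this

lemma P2h_shift {val : ℕ → ℕ → ℕ∞} {K : ℕ∞} {r c : ℕ}
    (h1 : P2h val K (r + 1) c) (h0 : 0 < val (r + 1) c ∧ val (r + 1) c < K) :
    P2h val K r (c + 1) := by
  intro i hg
  have := h1 (i + 1) (guard_shift h0 hg)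
  have e1 : r + 1 - (i+1) = r - i := by omega
  have e2 : c + (i+1) = c + 1 + i := by omega
  rwa [e1, e2] at this

lemma sp_allTrue (val : ℕ → ℕ → ℕ∞) (K : ℕ∞) : ∀ r c, ATh val K r c →
    ∃ a, searchPath val K r c = List.replicate a true := by
  intro r
  induction r with
  | zero => exact fun c _ => ⟨0, rfl⟩
  | succ r ih =>
    intro c hAT
    by_cases hs : val (r+1) c = K ∨ val (r+1) c = 0
    · exact ⟨0, by simp [searchPath, hs]⟩
    · push_neg at hs
      have h0 := hAT 0 (fun j hj => absurd hj (Nat.not_lt_zero j))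
      simp only [Nat.sub_zero, Nat.add_zero] at h0
      have hlt : val (r+1) c < K := by
        rcases h0 with h | h
        · exact lt_of_le_of_ne h hs.1
        · exact absurd h hs.2
      obtain ⟨a, ha⟩ := ih (c+1) (ATh_shift hAT ⟨pos_iff_ne_zero.mpr hs.2, hlt⟩)
      exact ⟨a+1, by simp [searchPath, hs.1, hs.2, hlt, ha, List.replicate_succ]⟩

def P2shape (w : List Bool) : Prop :=
  ∃ a w', w = List.replicate a true ++ w' ∧
    (w' = [] ∨ ∃ b, w' = false :: List.replicate b true)

lemma sp_phase2 (val : ℕ → ℕ → ℕ∞) (K : ℕ∞) : ∀ r c, P2h val K r c →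
    P2shape (searchPath val K r c) := by
  intro r
  induction r with
  | zero => exact fun c _ => ⟨0, [], rfl, Or.inl rfl⟩
  | succ r ih =>
    intro c hP
    by_cases hs : val (r+1) c = K ∨ val (r+1) c = 0
    · exact ⟨0, [], by simp [searchPath, hs], Or.inl rfl⟩
    · push_neg at hs
      have h0 := hP 0 (fun j hj => absurd hj (Nat.not_lt_zero j))
      simp only [Nat.sub_zero, Nat.add_zero] at h0
      rcases h0 with hle | h | ⟨hKx, hAT⟩
      · have hlt : val (r+1) c < K := lt_of_le_of_ne hle hs.1
        obtain ⟨a, w', hw, hsh⟩ := ih (c+1) (P2h_shift hP ⟨pos_iff_ne_zero.mpr hs.2, hlt⟩)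
        refine ⟨a+1, w', ?_, hsh⟩
        simp [searchPath, hs.1, hs.2, hlt, hw, List.replicate_succ]
      · exact absurd h hs.2
      · obtain ⟨b, hb⟩ := sp_allTrue val K r c hAT
        refine ⟨0, false :: List.replicate b true, ?_, Or.inr ⟨b, rfl⟩⟩
        simp [searchPath, hs.1, hs.2, hKx.asymm, hb]

lemma sp_descent (val : ℕ → ℕ → ℕ∞) (K : ℕ∞) (P : ℕ → ℕ → Prop) (S : List Bool → Prop)
    (hS0 : S []) (hP : ∀ r c, P r c → S (searchPath val K r c)) :
    ∀ r, Dsc val K P r →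
      ∃ a w, searchPath val K r 2 = List.replicate a false ++ w ∧ S w := by
  intro r
  induction r with
  | zero => exact fun _ => ⟨0, [], rfl, hS0⟩
  | succ r ih =>
    intro hD
    by_cases hs : val (r+1) 2 = K ∨ val (r+1) 2 = 0
    · exact ⟨0, [], by simp [searchPath, hs], hS0⟩
    · push_neg at hs
      have h0 := hD 0 (fun j hj => absurd hj (Nat.not_lt_zero j))
      simp only [Nat.sub_zero] at h0
      rcases h0 with h | h | h | ⟨hlt, hP2⟩
      · exact absurd h hs.1
      · exact absurd h hs.2
      · have hD' : Dsc val K P r := by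
          intro i hg
          have hg' : ∀ j < i + 1, K < val (r + 1 - j) 2 := by
            intro j hj
            cases j with
            | zero => simpa using h
            | succ k =>
              have e1 : r + 1 - (k+1) = r - k := by omega
              rw [e1]; exact hg k (by omega)
          have := hD (i+1) hg'
          have e1 : r + 1 - (i+1) = r - i := by omega
          rwa [e1] at this
        obtain ⟨a, w, hw, hSw⟩ := ih hD'
        refine ⟨a+1, w, ?_, hSw⟩
        simp [searchPath, hs.1, hs.2, h.asymm, hw, List.replicate_succ]
      · exact ⟨0, searchPath val K (r+1) 2, by simp, hP _ _ hP2⟩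

lemma numRuns_P2shape {w : List Bool} (h : P2shape w) (a : ℕ) :
    numRuns (List.replicate a false ++ w) ≤ 4 := by
  obtain ⟨a', w', rfl, hw'⟩ := h
  have h1 : numRuns w' ≤ 2 := by
    rcases hw' with rfl | ⟨b, rfl⟩
    · simp [numRuns, List.destutter]
    · calc numRuns (false :: List.replicate b true)
          ≤ numRuns (List.replicate b true) + 1 := numRuns_cons_le _ _
        _ ≤ 2 := by have := numRuns_replicate b true; omega
  calc numRuns (List.replicate a false ++ (List.replicate a' true ++ w'))
      ≤ numRuns (List.replicate a' true ++ w') + 1 := numRuns_replicate_append _ _ _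
    _ ≤ (numRuns w' + 1) + 1 := by
        have := numRuns_replicate_append a' true w'; omega
    _ ≤ 4 := by omega

/- ### lattice lemmas -/

lemma LDS.top_prop {h : ℕ} (L : LDS h) : ∀ d ρ γ, 2 + d ≤ ρ → 2 ≤ γ → ρ + γ ≤ h + 3 →
    L.val ρ γ = ⊤ → L.val (ρ - d) (γ + d) = ⊤ := by
  intro d
  induction d with
  | zero => intro ρ γ _ _ _ ht; simpa using ht
  | succ d ih =>
    intro ρ γ h1 h2 h3 ht
    have hst : L.val (ρ - 1) (γ + 1) = ⊤ := by
      by_contra hne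
      have := L.diag_mono ρ γ (by omega) h2 h3 hne
      rw [ht] at this
      exact not_top_lt this
    have := ih (ρ - 1) (γ + 1) (by omega) (by omega) (by omega) hst
    have e1 : ρ - 1 - d = ρ - (d+1) := by omega
    have e2 : γ + 1 + d = γ + (d+1) := by omega
    rwa [e1, e2] at this

lemma LDS.diag_chain {h : ℕ} (L : LDS h) : ∀ d ρ γ, 1 ≤ d → 2 + d ≤ ρ → 2 ≤ γ →
    ρ + γ ≤ h + 3 → L.val (ρ - d) (γ + d) ≠ ⊤ → L.val ρ γ < L.val (ρ - d) (γ + d) := by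
  intro d
  induction d with
  | zero => intro ρ γ hd; omega
  | succ d ih =>
    intro ρ γ _ h1 h2 h3 hne
    rcases Nat.eq_zero_or_pos d with h0 | hd
    · subst h0
      exact L.diag_mono ρ γ (by omega) h2 h3 hne
    · have e1 : ρ - 1 - d = ρ - (d+1) := by omega
      have e2 : γ + 1 + d = γ + (d+1) := by omega
      have hmid : L.val (ρ - 1) (γ + 1) ≠ ⊤ := by
        intro htop
        have := L.top_prop d (ρ - 1) (γ + 1) (by omega) (by omega) (by omega) htop
        rw [e1, e2] at this
        exact hne this
      calc L.val ρ γ < L.val (ρ - 1) (γ + 1) := L.diag_mono ρ γ (by omega) h2 h3 hmid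
        _ < L.val (ρ - (d+1)) (γ + (d+1)) := by
            have := ih (ρ - 1) (γ + 1) hd (by omega) (by omega) (by omega)
              (by rw [e1, e2]; exact hne)
            rwa [e1, e2] at this

lemma LDS.diag_chain_le {h : ℕ} (L : LDS h) : ∀ d ρ γ, 2 + d ≤ ρ → 2 ≤ γ →
    ρ + γ ≤ h + 3 → L.val (ρ - d) (γ + d) ≠ ⊤ → L.val ρ γ ≤ L.val (ρ - d) (γ + d) := by
  intro d ρ γ h1 h2 h3 hne
  rcases Nat.eq_zero_or_pos d with h0 | hd
  · subst h0; simp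
  · exact (L.diag_chain d ρ γ hd h1 h2 h3 hne).le

lemma LDS.col2_mono {h : ℕ} (L : LDS h) : ∀ d a, 2 ≤ a → a + d + 2 ≤ h + 3 →
    L.val a 2 ≤ L.val (a + d) 2 := by
  intro d
  induction d with
  | zero => intro a _ _; simp
  | succ d ih =>
    intro a ha hs
    have e : a + (d+1) = (a + d) + 1 := by omega
    rw [e]
    exact (ih a ha (by omega)).trans
      (L.col_mono (a + d) 2 (by omega) (by omega) (by omega)).le

lemma bounded4 (h : ℕ) (hh : 3 ≤ h) (L : LDS h) (hsorted : AlphaSorted h h L)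
    (K : ℕ∞) (hK0 : 0 < K) (hKt : K ≠ ⊤) : numRuns (path h L K) ≤ 4 := by
  have hP2 : ∀ r, 2 ≤ r → r ≤ h + 1 → L.val r 2 < K → P2h L.val K r 2 := by
    intro r hr2 hrh hfirst i hg
    by_cases hi0 : i = 0
    · subst hi0
      exact Or.inl (by simpa using hfirst.le)
    · by_cases h2 : 2 ≤ r - i
      · rcases le_or_gt (L.val (r - i) (2 + i)) K with hle | hgt
        · exact Or.inl hle
        · refine Or.inr (Or.inr ⟨hgt, ?_⟩)
          have hr3 : 3 ≤ r := by omega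
          have hlast : L.val 2 (r - 1) < K := by
            have hs := hsorted (r + 1) (by omega) (by omega)
            have e1 : r + 1 - 2 = r - 1 := by omega
            have e2 : r + 1 - 1 = r := by omega
            rw [e1, e2] at hs
            exact hs.trans hfirst
          intro i' hg'
          by_cases hρ2 : 2 ≤ r - i - 1 - i'
          · left
            have hne : L.val 2 (r - 1) ≠ ⊤ :=
              L.proper_inner 2 (r - 1) (by omega) (by omega) (by omega)
            have hch := L.diag_chain_le (r - i - 1 - i' - 2) (r - i - 1 - i') (2 + i + i')
              (by omega) (by omega) (by omega)
            have e1 : r - i - 1 - i' - (r - i - 1 - i' - 2) = 2 := by omega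
            have e2 : 2 + i + i' + (r - i - 1 - i' - 2) = r - 1 := by omega
            rw [e1, e2] at hch
            exact (hch hne).trans hlast.le
          · by_cases hρ1 : r - i - 1 - i' = 1
            · exact Or.inr (by rw [hρ1]; exact L.row_one _)
            · exfalso
              have hguard := hg' (r - i - 2) (by omega)
              have e : r - i - 1 - (r - i - 2) = 1 := by omega
              rw [e, L.row_one] at hguard
              exact lt_irrefl 0 hguard.1
      · by_cases hρ1 : r - i = 1
        · exact Or.inr (Or.inl (by rw [hρ1]; exact L.row_one _))
        · exfalso
          have hguard := hg (r - 1) (by omega)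
          have e : r - (r - 1) = 1 := by omega
          rw [e, L.row_one] at hguard
          exact lt_irrefl 0 hguard.1
  have hD : Dsc L.val K (P2h L.val K) (h + 1) := by
    intro i hg
    by_cases hle : i ≤ h - 1
    · rcases lt_trichotomy (L.val (h + 1 - i) 2) K with hlt | heq | hgt
      · exact Or.inr (Or.inr (Or.inr ⟨hlt, hP2 (h + 1 - i) (by omega) (by omega) hlt⟩))
      · exact Or.inl heq
      · exact Or.inr (Or.inr (Or.inl hgt))
    · by_cases hieq : i = h
      · refine Or.inr (Or.inl ?_)
        have e : h + 1 - i = 1 := by omega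
        rw [e]; exact L.row_one 2
      · exfalso
        have hguard := hg h (by omega)
        have e : h + 1 - h = 1 := by omega
        rw [e, L.row_one] at hguard
        exact (show (0:ℕ∞) ≤ K from zero_le).not_gt hguard
  obtain ⟨a, w, hw, hS⟩ := sp_descent L.val K (P2h L.val K) P2shape
    ⟨0, [], rfl, Or.inl rfl⟩ (fun r c hp => sp_phase2 L.val K r c hp) (h + 1) hD
  rw [path, hw]
  exact numRuns_P2shape hS a

lemma present2 (h : ℕ) (hh : 3 ≤ h) (L : LDS h) (hsorted : AlphaSorted h h L)
    (K : ℕ∞) (r0 c0 : ℕ) (hr0 : 2 ≤ r0) (hc0 : 2 ≤ c0) (hs0 : r0 + c0 ≤ h + 3)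
    (hK : L.val r0 c0 = K) : numRuns (path h L K) ≤ 2 := by
  by_cases hKt : K = ⊤
  · have hAT : ATh L.val K (h + 1) 2 := fun i _ => Or.inl (hKt ▸ le_top)
    obtain ⟨a, ha⟩ := sp_allTrue L.val K (h + 1) 2 hAT
    rw [path, ha]
    exact (numRuns_replicate a true).trans (by omega)
  · have hD : Dsc L.val K (ATh L.val K) (h + 1) := by
      intro i hg
      by_cases hle : i ≤ h - 1
      · rcases lt_trichotomy (L.val (h + 1 - i) 2) K with hlt | heq | hgt
        · refine Or.inr (Or.inr (Or.inr ⟨hlt, ?_⟩))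
          -- let r := h + 1 - i; we show K lies on diagonal r + 1 and conclude
          have hr2 : 2 ≤ h + 1 - i := by omega
          have hrh : h + 1 - i ≤ h + 1 := by omega
          -- Claim 1 : r0 + c0 ≤ (h + 1 - i) + 2
          have hclaim1 : r0 + c0 ≤ (h + 1 - i) + 2 := by
            by_contra hcon
            push_neg at hcon
            have hfirstle : L.val (r0 + c0 - 2) 2 ≤ K := by
              have hch := L.diag_chain_le (c0 - 2) (r0 + c0 - 2) 2
                (by omega) (by omega) (by omega)
              have e1 : r0 + c0 - 2 - (c0 - 2) = r0 := by omega
              have e2 : 2 + (c0 - 2) = c0 := by omega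
              rw [e1, e2, hK] at hch
              exact hch hKt
            have hguard := hg (h + 1 - (r0 + c0 - 2)) (by omega)
            have e : h + 1 - (h + 1 - (r0 + c0 - 2)) = r0 + c0 - 2 := by omega
            rw [e] at hguard
            exact absurd (hguard.trans_le hfirstle) (lt_irrefl K)
          -- Claim 2 : r0 + c0 = (h + 1 - i) + 2
          have hclaim2 : r0 + c0 = (h + 1 - i) + 2 := by
            by_contra hcon
            have hlt1 : r0 + c0 ≤ (h + 1 - i) + 1 := by omega
            have hKle : K ≤ L.val 2 (r0 + c0 - 2) := by
              have hch := L.diag_chain_le (r0 - 2) r0 c0 (by omega) (by omega) (by omega)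
              have e1 : r0 - (r0 - 2) = 2 := by omega
              have e2 : c0 + (r0 - 2) = r0 + c0 - 2 := by omega
              rw [e1, e2, hK] at hch
              exact hch (L.proper_inner 2 (r0 + c0 - 2) (by omega) (by omega) (by omega))
            have hlt2 : L.val 2 (r0 + c0 - 2) < L.val (r0 + c0 - 1) 2 := by
              have hs := hsorted (r0 + c0) (by omega) (by omega)
              have e : r0 + c0 - 1 = r0 + c0 - 1 := rfl
              exact hs
            have hle3 : L.val (r0 + c0 - 1) 2 ≤ L.val (h + 1 - i) 2 := by
              have hch := L.col2_mono ((h + 1 - i) - (r0 + c0 - 1)) (r0 + c0 - 1)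
                (by omega) (by omega)
              have e : r0 + c0 - 1 + ((h + 1 - i) - (r0 + c0 - 1)) = h + 1 - i := by omega
              rwa [e] at hch
            exact absurd (((hKle.trans_lt hlt2).trans_le hle3).trans hlt)
              (lt_irrefl K)
          -- now prove ATh at (h + 1 - i, 2)
          intro i' hg'
          rcases lt_trichotomy i' (c0 - 2) with hlt' | heq' | hgt'
          · left
            have hch := L.diag_chain (c0 - 2 - i') (h + 1 - i - i') (2 + i')
              (by omega) (by omega) (by omega) (by omega)
            have e1 : h + 1 - i - i' - (c0 - 2 - i') = r0 := by omega
            have e2 : 2 + i' + (c0 - 2 - i') = c0 := by omega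
            rw [e1, e2, hK] at hch
            exact (hch hKt).le
          · left
            have e1 : h + 1 - i - i' = r0 := by omega
            have e2 : 2 + i' = c0 := by omega
            rw [e1, e2, hK]
          · exfalso
            have hguard := hg' (c0 - 2) (by omega)
            have e1 : h + 1 - i - (c0 - 2) = r0 := by omega
            have e2 : 2 + (c0 - 2) = c0 := by omega
            rw [e1, e2, hK] at hguard
            exact lt_irrefl K hguard.2
        · exact Or.inl heq
        · exact Or.inr (Or.inr (Or.inl hgt))
      · by_cases hieq : i = h
        · refine Or.inr (Or.inl ?_)
          have e : h + 1 - i = 1 := by omega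
          rw [e]; exact L.row_one 2
        · exfalso
          have hguard := hg h (by omega)
          have e : h + 1 - h = 1 := by omega
          rw [e, L.row_one] at hguard
          exact (show (0:ℕ∞) ≤ K from zero_le).not_gt hguard
    obtain ⟨a, w, hw, b, hb⟩ := sp_descent L.val K (ATh L.val K)
      (fun w => ∃ b, w = List.replicate b true) ⟨0, rfl⟩
      (fun r c hp => sp_allTrue L.val K r c hp) (h + 1) hD
    rw [path, hw, hb]
    calc numRuns (List.replicate a false ++ List.replicate b true)
        ≤ numRuns (List.replicate b true) + 1 := numRuns_replicate_append _ _ _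
      _ ≤ 2 := by have := numRuns_replicate b true; omega


/-- If `L` is an `h`-sorted lattice of height `h`, then `J(K) ≤ 2` for every
present key `K`, `J(K) ≤ 4` for every absent key `K` of the search space, and
consequently `J(L) ≤ 4`. -/
theorem hSorted_jump_factors (h : ℕ) (hh : 3 ≤ h) (L : LDS h)
    (hsorted : AlphaSorted h h L) :
    (∀ K : ℕ∞, Present h L K → numRuns (path h L K) ≤ 2) ∧
    (∀ K : ℕ∞, InSearchSpace K → ¬ Present h L K → numRuns (path h L K) ≤ 4) ∧
    (∀ K : ℕ∞, InSearchSpace K → numRuns (path h L K) ≤ 4) := by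
  have habs : ∀ K : ℕ∞, InSearchSpace K → numRuns (path h L K) ≤ 4 :=
    fun K hK => bounded4 h hh L hsorted K hK.1 hK.2
  refine ⟨?_, fun K hK _ => habs K hK, habs⟩
  rintro K ⟨r0, c0, h1, h2, h3, h4⟩
  exact present2 h hh L hsorted K r0 c0 h1 h2 h3 h4
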